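/- arXiv:2511.16367 — 6 statements merged into one kernel-verified Lean document; each statement's English description precedes it below -/
import Mathlib

section
/- In the two-player zero-sum game with A₁ = {T,B}, A₂ = ℕ, and player 1's payoff u₁(T,n) = 1/n, u₁(B,n) = −1/n, played with finitely additive strategies (κ₁, κ₂) where κ₁ = (p, 1−p), the pair (κ₁, κ₂) is a Nash equilibrium if and only if p ≥ 1/2 and κ₂ is a diffuse charge on ℕ. -/
/-- A charge: a finitely additive probability measure on the powerset of `α`. -/
structure IsCharge {α : Type*} (κ : Set α → ℝ) : Prop where
  nonneg : ∀ E, 0 ≤ κ E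
  empty : κ ∅ = 0
  total : κ Set.univ = 1
  additive : ∀ E G, Disjoint E G → κ (E ∪ G) = κ E + κ G

/-- The integral of a bounded function `u` against a charge `κ`, defined as the supremum of
integrals of simple (finite-range) functions lying below `u`. -/
noncomputable def chargeIntegral {α : Type*} (κ : Set α → ℝ) (u : α → ℝ) : ℝ :=
  sSup {r | ∃ g : α → ℝ, ∃ hg : (Set.range g).Finite,
    (∀ a, g a ≤ u a) ∧ r = ∑ c ∈ hg.toFinset, c * κ (g ⁻¹' {c})}

/-- The expected payoff of player 1 in the zero-sum game with `A₁ = {T,B}`, `A₂ = ℕ`,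
`u₁(T,n) = 1/n`, `u₁(B,n) = -1/n`, when player 1 plays `T` with probability `p`:
`U₁(p, κ₂) = (2p - 1)·∫ (1/n) dκ₂(n)`. -/
noncomputable def waldPayoff (p : ℝ) (κ₂ : Set ℕ+ → ℝ) : ℝ :=
  (2 * p - 1) * chargeIntegral κ₂ (fun n => 1 / ((n : ℕ) : ℝ))

namespace WaldAux

lemma charge_mono {α : Type*} {κ : Set α → ℝ} (h : IsCharge κ) {E F : Set α}
    (hEF : E ⊆ F) : κ E ≤ κ F := by
  have h1 := h.additive E (F \ E) Set.disjoint_sdiff_right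
  rw [Set.union_diff_cancel hEF] at h1
  have h2 := h.nonneg (F \ E)
  linarith

lemma charge_biUnion {α β : Type*} {κ : Set α → ℝ} (h : IsCharge κ) (s : Finset β)
    (f : β → Set α) (hd : ∀ c ∈ s, ∀ d ∈ s, c ≠ d → Disjoint (f c) (f d)) :
    κ (⋃ c ∈ s, f c) = ∑ c ∈ s, κ (f c) := by
  classical
  induction s using Finset.induction_on with
  | empty => simpa using h.empty
  | @insert a s ha ih =>
    rw [Finset.set_biUnion_insert, h.additive _ _ ?_, Finset.sum_insert ha,
      ih (fun c hc d hd' hcd => hd c (Finset.mem_insert_of_mem hc) d (Finset.mem_insert_of_mem hd') hcd)]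
    · exact Set.disjoint_iUnion₂_right.mpr fun i hi =>
        hd a (Finset.mem_insert_self a s) i (Finset.mem_insert_of_mem hi)
          (fun hai => ha (hai ▸ hi))

lemma charge_finite {α : Type*} {κ : Set α → ℝ} (h : IsCharge κ)
    (hdiff : ∀ a : α, κ {a} = 0) {S : Set α} (hS : S.Finite) : κ S = 0 := by
  classical
  have hSeq : S = ⋃ a ∈ hS.toFinset, {a} := by
    ext x; simp [hS.mem_toFinset]
  rw [hSeq, charge_biUnion h _ _ (fun c _ d _ hcd => Set.disjoint_singleton.mpr hcd)]
  simp [hdiff]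


/-- The set whose sup defines the integral of `1/n`. -/
def IS (κ : Set ℕ+ → ℝ) : Set ℝ :=
  {r | ∃ g : ℕ+ → ℝ, ∃ hg : (Set.range g).Finite,
    (∀ a, g a ≤ 1 / ((a : ℕ) : ℝ)) ∧ r = ∑ c ∈ hg.toFinset, c * κ (g ⁻¹' {c})}

lemma chargeIntegral_eq (κ : Set ℕ+ → ℝ) :
    chargeIntegral κ (fun n => 1 / ((n : ℕ) : ℝ)) = sSup (IS κ) := rfl

lemma upos (a : ℕ+) : (0:ℝ) < 1 / ((a : ℕ) : ℝ) := by
  have : (0:ℝ) < ((a:ℕ):ℝ) := by exact_mod_cast a.pos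
  positivity

lemma ule (a : ℕ+) : 1 / ((a : ℕ) : ℝ) ≤ 1 := by
  have h1 : (1:ℝ) ≤ ((a:ℕ):ℝ) := by exact_mod_cast a.one_le
  rw [div_le_one (by linarith)]; exact h1

lemma zero_mem_IS (κ : Set ℕ+ → ℝ) : (0:ℝ) ∈ IS κ := by
  refine ⟨fun _ => 0, (Set.finite_singleton 0).subset (by simp [Set.range_const]),
    fun a => (upos a).le, ?_⟩
  exact (Finset.sum_eq_zero (fun c hc => by
    have : c = 0 := by simpa using (Set.Finite.mem_toFinset _).mp hc
    simp [this])).symm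

lemma IS_le_one {κ : Set ℕ+ → ℝ} (h : IsCharge κ) : ∀ r ∈ IS κ, r ≤ 1 := by
  classical
  rintro r ⟨g, hg, hgu, rfl⟩
  set t := hg.toFinset with ht
  have hsplit := Finset.sum_filter_add_sum_filter_not t (fun c => 0 < c)
      (fun c => c * κ (g ⁻¹' {c}))
  have hneg : ∑ c ∈ t.filter (fun c => ¬ 0 < c), c * κ (g ⁻¹' {c}) ≤ 0 := by
    refine Finset.sum_nonpos fun c hc => ?_
    have hc0 : c ≤ 0 := le_of_not_gt (Finset.mem_filter.mp hc).2
    have := h.nonneg (g ⁻¹' {c})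
    nlinarith
  have hpos : ∑ c ∈ t.filter (fun c => 0 < c), c * κ (g ⁻¹' {c})
      ≤ ∑ c ∈ t.filter (fun c => 0 < c), κ (g ⁻¹' {c}) := by
    refine Finset.sum_le_sum fun c hc => ?_
    have hcr : c ∈ Set.range g := (Set.Finite.mem_toFinset _).mp (Finset.mem_filter.mp hc).1
    obtain ⟨a, ha⟩ := hcr
    have hc1 : c ≤ 1 := ha ▸ (hgu a).trans (ule a)
    have := h.nonneg (g ⁻¹' {c})
    nlinarith
  have hun : ∑ c ∈ t.filter (fun c => 0 < c), κ (g ⁻¹' {c}) ≤ 1 := by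
    rw [← charge_biUnion h _ _ (fun c _ d _ hcd => by
      rw [Set.disjoint_left]; rintro a ha1 ha2
      exact hcd (by simp_all))]
    have := charge_mono h (Set.subset_univ (⋃ c ∈ t.filter (fun c => 0 < c), g ⁻¹' {c}))
    rw [h.total] at this; exact this
  linarith

lemma IS_bddAbove {κ : Set ℕ+ → ℝ} (h : IsCharge κ) : BddAbove (IS κ) :=
  ⟨1, fun r hr => IS_le_one h r hr⟩

lemma integral_nonneg {κ : Set ℕ+ → ℝ} (h : IsCharge κ) :
    0 ≤ chargeIntegral κ (fun n => 1 / ((n : ℕ) : ℝ)) := by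
  rw [chargeIntegral_eq]
  exact le_csSup (IS_bddAbove h) (zero_mem_IS κ)

lemma indicator_mem_IS (κ : Set ℕ+ → ℝ) (n : ℕ+) :
    (1 / ((n : ℕ) : ℝ)) * κ {n} ∈ IS κ := by
  classical
  set v : ℝ := 1 / ((n : ℕ) : ℝ) with hv
  have hvpos : 0 < v := upos n
  set g : ℕ+ → ℝ := fun a => if a = n then v else 0 with hgdef
  have hne : (n + 1 : ℕ+) ≠ n := by
    intro hc
    have := congrArg (fun m : ℕ+ => (m : ℕ)) hc
    simp at this
  have hrange : Set.range g = {v, 0} := by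
    ext c
    constructor
    · rintro ⟨a, rfl⟩
      by_cases ha : a = n <;> simp [hgdef, ha]
    · rintro (rfl | rfl)
      · exact ⟨n, by simp [hgdef]⟩
      · exact ⟨n + 1, by simp [hgdef, hne]⟩
  have hgfin : (Set.range g).Finite := by rw [hrange]; exact (Set.finite_singleton _).insert _
  refine ⟨g, hgfin, fun a => ?_, ?_⟩
  · by_cases ha : a = n
    · simp [hgdef, ha, hv]
    · simp only [hgdef, if_neg ha]; exact (upos a).le
  · have htf : hgfin.toFinset = ({v, 0} : Finset ℝ) := by
      ext c; simp [Set.Finite.mem_toFinset, hrange]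
    have hpre : g ⁻¹' {v} = {n} := by
      ext a
      by_cases ha : a = n <;> simp [hgdef, ha, hvpos.ne, hvpos.ne']
    rw [htf, Finset.sum_insert (by simpa using hvpos.ne'), hpre]
    simp

lemma singleton_le_integral {κ : Set ℕ+ → ℝ} (h : IsCharge κ) (n : ℕ+) :
    (1 / ((n : ℕ) : ℝ)) * κ {n} ≤ chargeIntegral κ (fun n => 1 / ((n : ℕ) : ℝ)) := by
  rw [chargeIntegral_eq]
  exact le_csSup (IS_bddAbove h) (indicator_mem_IS κ n)

lemma diffuse_integral {κ : Set ℕ+ → ℝ} (h : IsCharge κ) (hd : ∀ n : ℕ+, κ {n} = 0) :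
    chargeIntegral κ (fun n => 1 / ((n : ℕ) : ℝ)) = 0 := by
  refine le_antisymm ?_ (integral_nonneg h)
  rw [chargeIntegral_eq]
  refine csSup_le ⟨0, zero_mem_IS κ⟩ ?_
  rintro r ⟨g, hg, hgu, rfl⟩
  refine Finset.sum_nonpos fun c _ => ?_
  rcases le_or_gt c 0 with hc | hc
  · have := h.nonneg (g ⁻¹' {c}); nlinarith
  · have hfin : (g ⁻¹' {c}).Finite := by
      have hN : ∃ N : ℕ+, ∀ a : ℕ+, g a = c → a ≤ N := by
        refine ⟨⟨Nat.ceil (1 / c) + 1, Nat.succ_pos _⟩, fun a ha => ?_⟩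
        have h1 : c ≤ 1 / ((a : ℕ) : ℝ) := ha ▸ hgu a
        have hapos : (0:ℝ) < ((a:ℕ):ℝ) := by exact_mod_cast a.pos
        have h2 : ((a:ℕ):ℝ) ≤ 1 / c := by
          rw [le_div_iff₀ hc]
          calc ((a:ℕ):ℝ) * c ≤ ((a:ℕ):ℝ) * (1 / ((a:ℕ):ℝ)) :=
                mul_le_mul_of_nonneg_left h1 hapos.le
            _ = 1 := by field_simp
        have h3 : (a : ℕ) ≤ Nat.ceil (1 / c) := by
          exact_mod_cast h2.trans (Nat.le_ceil _)
        have : (a : ℕ) ≤ Nat.ceil (1 / c) + 1 := h3.trans (Nat.le_succ _)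
        exact_mod_cast this
      obtain ⟨N, hNle⟩ := hN
      exact (Set.finite_Iic N).subset fun a ha => hNle a ha
    rw [charge_finite h hd hfin]
    simp


open Classical in
noncomputable def dirac (n : ℕ+) : Set ℕ+ → ℝ := fun E => if n ∈ E then 1 else 0

lemma dirac_charge (n : ℕ+) : IsCharge (dirac n) := by
  constructor
  · intro E; unfold dirac; split <;> norm_num
  · simp [dirac]
  · simp [dirac]
  · intro E G hEG
    by_cases hE : n ∈ E <;> by_cases hG : n ∈ G
    · exact absurd (Set.disjoint_left.mp hEG hE) (by simpa using hG)
    all_goals simp [dirac, hE, hG]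

lemma dirac_integral (n : ℕ+) :
    chargeIntegral (dirac n) (fun n => 1 / ((n : ℕ) : ℝ)) = 1 / ((n : ℕ) : ℝ) := by
  rw [chargeIntegral_eq]
  refine le_antisymm (csSup_le ⟨0, zero_mem_IS _⟩ ?_) ?_
  · rintro r ⟨g, hg, hgu, rfl⟩
    classical
    have hterm : ∀ c, c * dirac n (g ⁻¹' {c}) = if g n = c then c else 0 := by
      intro c
      unfold dirac
      by_cases hc : g n = c <;> simp [hc]
    calc ∑ c ∈ hg.toFinset, c * dirac n (g ⁻¹' {c})
        = ∑ c ∈ hg.toFinset, if g n = c then c else 0 := by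
          exact Finset.sum_congr rfl fun c _ => hterm c
      _ = if g n ∈ hg.toFinset then g n else 0 := Finset.sum_ite_eq _ _ _
      _ ≤ 1 / ((n : ℕ) : ℝ) := by
          split
          · exact hgu n
          · exact (upos n).le
  · have := indicator_mem_IS (dirac n) n
    have hd : dirac n {n} = 1 := by simp [dirac]
    rw [hd, mul_one] at this
    exact le_csSup (IS_bddAbove (dirac_charge n)) this

end WaldAux

open WaldAux

/-- In the zero-sum game with `A₁ = {T,B}`, `A₂ = ℕ`, and payoffs `u₁(T,n) = 1/n`,
`u₁(B,n) = -1/n`, played with finitely additive strategies, the pair `((p, 1-p), κ₂)` is a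
Nash equilibrium precisely when `p ≥ 1/2` and `κ₂` is a diffuse charge on `ℕ`. -/
theorem wald_variant_nash_iff (p : ℝ) (hp : p ∈ Set.Icc (0 : ℝ) 1)
    (κ₂ : Set ℕ+ → ℝ) (hκ₂ : IsCharge κ₂) :
    ((∀ q ∈ Set.Icc (0 : ℝ) 1, waldPayoff q κ₂ ≤ waldPayoff p κ₂) ∧
     (∀ τ : Set ℕ+ → ℝ, IsCharge τ → waldPayoff p κ₂ ≤ waldPayoff p τ))
    ↔ (1 / 2 ≤ p ∧ ∀ n : ℕ+, κ₂ {n} = 0) := by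
  obtain ⟨hp0, hp1⟩ := hp
  set I := chargeIntegral κ₂ (fun n => 1 / ((n : ℕ) : ℝ)) with hI
  have hInn : 0 ≤ I := integral_nonneg hκ₂
  constructor
  · rintro ⟨h1, h2⟩
    -- first, I = 0
    have hIzero : I = 0 := by
      by_contra hne
      have hIpos : 0 < I := lt_of_le_of_ne hInn (Ne.symm hne)
      -- from h1 with q = 1 : I ≤ (2p-1) I, hence p ≥ 1, so p = 1
      have hq1 := h1 1 ⟨zero_le_one, le_refl 1⟩
      simp only [waldPayoff, ← hI] at hq1
      have hpge : (1:ℝ) ≤ p := by nlinarith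
      have hpeq : p = 1 := le_antisymm hp1 hpge
      -- from h2 with dirac : I ≤ 1/n for all n
      obtain ⟨k, hk⟩ := exists_nat_one_div_lt hIpos
      set N : ℕ+ := ⟨k + 1, Nat.succ_pos k⟩ with hN
      have h2N := h2 (dirac N) (dirac_charge N)
      simp only [waldPayoff, ← hI, dirac_integral, hpeq] at h2N
      have hNc : ((N : ℕ) : ℝ) = (k : ℝ) + 1 := by
        simp [hN]
      rw [hNc] at h2N
      nlinarith
    have hdiff : ∀ n : ℕ+, κ₂ {n} = 0 := by
      intro n
      have hle := singleton_le_integral hκ₂ n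
      rw [← hI, hIzero] at hle
      have h0 : 0 ≤ (1 / ((n : ℕ) : ℝ)) * κ₂ {n} :=
        mul_nonneg (upos n).le (hκ₂.nonneg _)
      have := upos n
      have hk := hκ₂.nonneg ({n} : Set ℕ+)
      nlinarith
    refine ⟨?_, hdiff⟩
    -- p ≥ 1/2 from h2 with dirac 1
    have h21 := h2 (dirac 1) (dirac_charge 1)
    simp only [waldPayoff, ← hI, hIzero, dirac_integral] at h21
    have h1c : (((1 : ℕ+) : ℕ) : ℝ) = 1 := by norm_num
    rw [h1c] at h21
    nlinarith
  · rintro ⟨hphalf, hdiff⟩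
    have hIzero : I = 0 := diffuse_integral hκ₂ hdiff
    constructor
    · intro q _
      simp only [waldPayoff, ← hI, hIzero, mul_zero, le_refl]
    · intro τ hτ
      simp only [waldPayoff, ← hI, hIzero, mul_zero]
      exact mul_nonneg (by linarith) (integral_nonneg hτ)
end

section
/- Let ζ = (ζ₁,…,ζ_n) be finitely additive nonnegative measures on ℕ with ζᵢ(ℕ) < 1, and consider a strategic form game with finitely additive strategies restricted to Ξᵢ(ζᵢ) = {η : η(E) ≥ ζᵢ(E) for all E}. Let ρ be a profile with ρᵢ ∈ Ξᵢ(ζᵢ) such that for every player i: (1) every k ∈ ℕ with ρᵢ^c({k}) > ζᵢ^c({k}) is a best response (as a Dirac strategy) to ρ among all charges, and (2) the diffuse part of ρᵢ equals the diffuse part of ζᵢ. Then ρ is a Nash equilibrium of the restricted game, i.e., each ρᵢ maximizes player i's multilinear expected payoff over Ξᵢ(ζᵢ). -/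
/-- A finitely additive nonnegative measure on the powerset of `α`. -/
structure IsFinAdd {α : Type*} (μ : Set α → ℝ) : Prop where
  nonneg : ∀ E, 0 ≤ μ E
  empty : μ ∅ = 0
  additive : ∀ E G, Disjoint E G → μ (E ∪ G) = μ E + μ G

open Classical in
/-- The Dirac charge at a point. -/
noncomputable def diracCharge {α : Type*} (k : α) : Set α → ℝ :=
  fun E => if k ∈ E then 1 else 0

/-- A set function on `ℕ` is countably additive if it is determined by its values on
singletons: `κ(E) = ∑_{k ∈ E} κ({k})`. -/
def CountablyAdditive (κ : Set ℕ → ℝ) : Prop :=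
  ∀ E : Set ℕ, κ E = ∑' k : E, κ {(k : ℕ)}

lemma IsFinAdd.mono {μ : Set ℕ → ℝ} (h : IsFinAdd μ) {E G : Set ℕ} (hEG : E ⊆ G) :
    μ E ≤ μ G := by
  have : μ G = μ E + μ (G \ E) := by
    rw [← h.additive E (G \ E) Set.disjoint_sdiff_right, Set.union_diff_cancel hEG]
  linarith [h.nonneg (G \ E)]

lemma IsFinAdd.finsetSum {μ : Set ℕ → ℝ} (h : IsFinAdd μ) (F : Finset ℕ) :
    ∑ k ∈ F, μ {k} = μ (↑F : Set ℕ) := by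
  classical
  induction F using Finset.induction_on with
  | empty => simpa using h.empty.symm
  | insert a F ha ih =>
    rw [Finset.sum_insert ha, ih]
    have : ((insert a F : Finset ℕ) : Set ℕ) = {a} ∪ (↑F : Set ℕ) := by simp
    rw [this, h.additive _ _ (by simpa using ha)]

lemma IsFinAdd.summable {μ : Set ℕ → ℝ} (h : IsFinAdd μ) :
    Summable (fun k : ℕ => μ {k}) := by
  refine summable_of_sum_le (c := μ Set.univ) (fun k => h.nonneg _) (fun F => ?_)
  rw [h.finsetSum F]
  exact h.mono (Set.subset_univ _)

lemma IsCharge.finAdd {κ : Set ℕ → ℝ} (h : IsCharge κ) : IsFinAdd κ :=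
  ⟨h.nonneg, h.empty, h.additive⟩

lemma diracCharge_isCharge (k : ℕ) : IsCharge (diracCharge k) := by
  classical
  refine ⟨fun E => ?_, ?_, ?_, fun E G hEG => ?_⟩
  · unfold diracCharge; split <;> norm_num
  · simp [diracCharge]
  · simp [diracCharge]
  · unfold diracCharge
    by_cases hE : k ∈ E
    · have hG : k ∉ G := fun hG => (Set.disjoint_left.mp hEG hE) hG
      simp [hE, hG]
    · by_cases hG : k ∈ G <;> simp [hE, hG]

/-- Sufficient conditions for a Nash equilibrium of the restricted game `Γ(ζ)` in which each
player `i` chooses charges dominating `ζᵢ` setwise.  The payoffs `U i` are multilinear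
expected payoffs of bounded uniform limits of simple functions; this is captured by:
affinity in each player's own component (`haff`), countable linearity over the pure actions
for countably additive strategies (`hcount`), and the fact that no charge can outperform
every pure action (`hsup`).  If `ρᵢ` dominates `ζᵢ`, every `k` with
`ρᵢ^c({k}) > ζᵢ^c({k})` is a best response (as a Dirac strategy) to `ρ` among all charges,
and the diffuse part of `ρᵢ` equals the diffuse part of `ζᵢ`, then `ρ` is a Nash equilibrium
of the restricted game: each `ρᵢ` maximizes `U i` over the charges dominating `ζᵢ`. -/
theorem nash_of_restricted_game (n : ℕ) (hn : 0 < n)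
    (ζ : Fin n → Set ℕ → ℝ) (hζ : ∀ i, IsFinAdd (ζ i)) (hζ1 : ∀ i, ζ i Set.univ < 1)
    (U : Fin n → (Fin n → Set ℕ → ℝ) → ℝ)
    (haff : ∀ (i : Fin n) (σ : Fin n → Set ℕ → ℝ) (κ κ' : Set ℕ → ℝ) (c : ℝ),
      0 ≤ c → c ≤ 1 →
      U i (Function.update σ i (fun E => c * κ E + (1 - c) * κ' E)) =
        c * U i (Function.update σ i κ) + (1 - c) * U i (Function.update σ i κ'))
    (hcount : ∀ (i : Fin n) (σ : Fin n → Set ℕ → ℝ) (κ : Set ℕ → ℝ), IsCharge κ →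
      CountablyAdditive κ →
      U i (Function.update σ i κ) = ∑' k : ℕ, κ {k} * U i (Function.update σ i (diracCharge k)))
    (hsup : ∀ (i : Fin n) (σ : Fin n → Set ℕ → ℝ) (ψ : Set ℕ → ℝ), IsCharge ψ → ∀ c : ℝ,
      (∀ k : ℕ, U i (Function.update σ i (diracCharge k)) ≤ c) →
      U i (Function.update σ i ψ) ≤ c)
    (ρ : Fin n → Set ℕ → ℝ) (hρ : ∀ i, IsCharge (ρ i)) (hρζ : ∀ i E, ζ i E ≤ ρ i E)
    -- [1]: every atom of the countably additive part of `ρᵢ` exceeding that of `ζᵢ`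
    -- is a pure best response to `ρ` among all charges:
    (h1 : ∀ (i : Fin n) (k : ℕ), ζ i {k} < ρ i {k} →
      ∀ ψ : Set ℕ → ℝ, IsCharge ψ →
        U i (Function.update ρ i ψ) ≤ U i (Function.update ρ i (diracCharge k)))
    -- [2]: the diffuse part of `ρᵢ` equals the diffuse part of `ζᵢ`:
    (h2 : ∀ (i : Fin n) (E : Set ℕ),
      ρ i E - ∑' k : E, ρ i {(k : ℕ)} = ζ i E - ∑' k : E, ζ i {(k : ℕ)}) :
    ∀ (i : Fin n) (η : Set ℕ → ℝ), IsCharge η → (∀ E, ζ i E ≤ η E) →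
      U i (Function.update ρ i η) ≤ U i ρ := by
  intro i η hη hηζ
  have hζi := hζ i
  have hρi := (hρ i).finAdd
  set t : ℝ := ζ i Set.univ with ht_def
  have ht1 : t < 1 := hζ1 i
  have ht0 : 0 ≤ t := hζi.nonneg _
  set s : ℝ := 1 - t with hs_def
  have hs : 0 < s := by simp [hs_def]; linarith
  -- diffuse part at univ / summabilities
  have hρsum : Summable (fun k : ℕ => ρ i {k}) := hρi.summable
  have hζsum : Summable (fun k : ℕ => ζ i {k}) := hζi.summable
  set p : ℕ → ℝ := fun k => ρ i {k} - ζ i {k} with hp_def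
  have hpsum : Summable p := hρsum.sub hζsum
  have hp0 : ∀ k, 0 ≤ p k := fun k => by simp [hp_def]; exact hρζ i {k}
  have hptot : ∑' k, p k = s := by
    have h2u := h2 i Set.univ
    rw [tsum_univ (fun k => ρ i {k}), tsum_univ (fun k => ζ i {k})] at h2u
    have : ∑' k, p k = ∑' k, ρ i {k} - ∑' k, ζ i {k} := hρsum.tsum_sub hζsum
    rw [this]
    have := (hρ i).total
    simp only [hs_def, ht_def]
    linarith [h2u]
  -- the three building-block strategies
  set π : Set ℕ → ℝ := fun E => (ρ i E - ζ i E) / s with hπ_def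
  set π' : Set ℕ → ℝ := fun E => (η E - ζ i E) / s with hπ'_def
  set θ : Set ℕ → ℝ := fun E => ζ i E / t with hθ_def
  have hζ_zero : t = 0 → ∀ E, ζ i E = 0 := by
    intro ht E
    have h1' := hζi.mono (Set.subset_univ E)
    have h2' := hζi.nonneg E
    rw [← ht_def] at h1'
    linarith
  have hρtot : ρ i Set.univ = 1 := (hρ i).total
  have hηtot : η Set.univ = 1 := hη.total
  have hπ_charge : IsCharge π := by
    refine ⟨fun E => ?_, ?_, ?_, fun E G hEG => ?_⟩
    · exact div_nonneg (by linarith [hρζ i E]) hs.le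
    · simp [hπ_def, hρi.empty, hζi.empty]
    · simp only [hπ_def, hρtot, ← ht_def, hs_def]
      field_simp
      exact div_self (sub_pos.mpr ht1).ne'
    · simp only [hπ_def, hρi.additive E G hEG, hζi.additive E G hEG]
      ring
  have hπ'_charge : IsCharge π' := by
    refine ⟨fun E => ?_, ?_, ?_, fun E G hEG => ?_⟩
    · exact div_nonneg (by linarith [hηζ E]) hs.le
    · simp [hπ'_def, hη.empty, hζi.empty]
    · simp only [hπ'_def, hηtot, ← ht_def, hs_def]
      field_simp
      exact div_self (sub_pos.mpr ht1).ne'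
    · simp only [hπ'_def, hη.additive E G hEG, hζi.additive E G hEG]
      ring
  -- countable additivity of π
  have hπ_count : CountablyAdditive π := by
    intro E
    have h2E := h2 i E
    have hsub : ρ i E - ζ i E = ∑' k : E, p (k : ℕ) := by
      have : ∑' k : E, p (k : ℕ) = (∑' k : E, ρ i {(k : ℕ)}) - ∑' k : E, ζ i {(k : ℕ)} :=
        Summable.tsum_sub (hρsum.subtype E) (hζsum.subtype E)
      rw [this]; linarith
    have hsing : ∀ k : ℕ, π {k} = p k / s := fun k => rfl
    calc π E = (∑' k : E, p (k : ℕ)) / s := by rw [hπ_def]; simp only [hsub]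
      _ = ∑' k : E, p (k : ℕ) / s := by rw [tsum_div_const]
      _ = ∑' k : E, π {(k : ℕ)} := by simp only [hsing]
  -- decompositions
  have hcomb_ρ : (fun E => s * π E + (1 - s) * θ E) = ρ i := by
    funext E
    simp only [hπ_def, hθ_def]
    have h1s : (1 : ℝ) - s = t := by simp [hs_def]
    rw [h1s]
    rcases eq_or_lt_of_le ht0 with h | h
    · rw [hζ_zero h.symm E, ← h]
      field_simp
      ring
    · field_simp
      ring
  have hcomb_η : (fun E => s * π' E + (1 - s) * θ E) = η := by
    funext E
    simp only [hπ'_def, hθ_def]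
    have h1s : (1 : ℝ) - s = t := by simp [hs_def]
    rw [h1s]
    rcases eq_or_lt_of_le ht0 with h | h
    · rw [hζ_zero h.symm E, ← h]
      field_simp
      ring
    · field_simp
      ring
  have hs1 : s ≤ 1 := by simp [hs_def]; linarith
  have haffρ := haff i ρ π θ s hs.le hs1
  have haffη := haff i ρ π' θ s hs.le hs1
  rw [hcomb_ρ, Function.update_eq_self] at haffρ
  rw [hcomb_η] at haffη
  -- key inequality: U (π') ≤ U (π)
  have hkey : U i (Function.update ρ i π') ≤ U i (Function.update ρ i π) := by
    set B : ℝ := U i (Function.update ρ i π') with hB_def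
    -- choose an atom of the extra countably additive mass
    have hex : ∃ k0, 0 < p k0 := by
      by_contra hnone
      push_neg at hnone
      have : ∀ k, p k = 0 := fun k => le_antisymm (hnone k) (hp0 k)
      have : ∑' k, p k = 0 := by simp [this]
      rw [hptot] at this
      linarith
    obtain ⟨k0, hk0⟩ := hex
    set M0 : ℝ := U i (Function.update ρ i (diracCharge k0)) with hM0_def
    have hk0' : ζ i {k0} < ρ i {k0} := by
      have := hk0; simp [hp_def] at this; linarith
    have hM0 : ∀ k : ℕ, U i (Function.update ρ i (diracCharge k)) ≤ M0 :=
      fun k => h1 i k0 hk0' (diracCharge k) (diracCharge_isCharge k)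
    have hBM0 : B ≤ M0 := h1 i k0 hk0' π' hπ'_charge
    have hBk : ∀ k : ℕ, 0 < p k → B ≤ U i (Function.update ρ i (diracCharge k)) := by
      intro k hpk
      have hk' : ζ i {k} < ρ i {k} := by simp [hp_def] at hpk; linarith
      exact h1 i k hk' π' hπ'_charge
    -- compare termwise
    set f : ℕ → ℝ := fun k => π {k} * U i (Function.update ρ i (diracCharge k)) with hf_def
    set g : ℕ → ℝ := fun k => p k * (B / s) with hg_def
    have hπk : ∀ k, π {k} = p k / s := fun k => rfl
    have hgf : ∀ k, g k ≤ f k := by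
      intro k
      rcases eq_or_lt_of_le (hp0 k) with h | h
      · simp [hg_def, hf_def, hπk, ← h]
      · have := hBk k h
        have h1' : g k = (p k / s) * B := by rw [hg_def]; ring
        simp only [h1', hf_def, hπk k]
        exact mul_le_mul_of_nonneg_left this (div_nonneg (hp0 k) hs.le)
    have hfh : ∀ k, f k ≤ p k * (M0 / s) := by
      intro k
      have h1' : p k * (M0 / s) = (p k / s) * M0 := by ring
      simp only [h1', hf_def, hπk k]
      exact mul_le_mul_of_nonneg_left (hM0 k) (div_nonneg (hp0 k) hs.le)
    have hgsum : Summable g := hpsum.mul_right _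
    have hhsum : Summable (fun k => p k * (M0 / s)) := hpsum.mul_right _
    have hfsum : Summable f := by
      have h' : Summable (fun k => f k - g k) := by
        apply Summable.of_nonneg_of_le (fun k => by linarith [hgf k])
          (fun k => by linarith [hfh k]; ) ((hhsum.sub hgsum))
      have := h'.add hgsum
      simpa using this
    have htsumg : ∑' k, g k = B := by
      rw [hg_def, tsum_mul_right, hptot]
      field_simp
    have hle : B ≤ ∑' k, f k := by
      rw [← htsumg]
      exact Summable.tsum_le_tsum hgf hgsum hfsum
    have hcountπ := hcount i ρ π hπ_charge hπ_count
    rw [hcountπ]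
    exact hle
  rw [haffη, haffρ]
  have h1s0 : 0 ≤ 1 - s := by linarith
  nlinarith [hkey]
end

section
/- For any natural numbers 1 < K₁ < K₂ < … < K_M, there exists a countably additive probability measure σ on ℕ with σ({k}) > 0 for every k, such that in the game where the opponent's payoff from playing ℓ against σ is (∑_{m<ℓ} σ({m}))/ℓ, the set of maximizers of ℓ ↦ (∑_{m<ℓ} σ({m}))/ℓ over ℕ is exactly {K₁, …, K_M}. -/
set_option maxHeartbeats 1000000 in
/-- For any natural numbers `1 < K₁ < K₂ < … < K_M` there is a strictly positive (on
`{1,2,…}`) countably additive probability mass function `σ` on `ℕ` such that the set of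
maximizers over `ℓ ≥ 1` of `ℓ ↦ (∑_{m<ℓ} σ(m))/ℓ` is exactly `{K₁, …, K_M}`.
(Here `σ 0 = 0` encodes that the action set is `{1,2,…}`.) -/
theorem exists_full_support_strategy_with_given_best_responses
    (M : ℕ) (hM : 0 < M) (K : Fin M → ℕ) (hKmono : StrictMono K) (hK1 : 1 < K ⟨0, hM⟩) :
    ∃ σ : ℕ → ℝ, σ 0 = 0 ∧ (∀ k : ℕ, 1 ≤ k → 0 < σ k) ∧ HasSum σ 1 ∧
      {ℓ : ℕ | 1 ≤ ℓ ∧ ∀ ℓ' : ℕ, 1 ≤ ℓ' →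
          (∑ m ∈ Finset.range ℓ', σ m) / (ℓ' : ℝ) ≤ (∑ m ∈ Finset.range ℓ, σ m) / (ℓ : ℝ)}
        = Set.range K := by
  set a := K ⟨0, hM⟩ with ha_def
  set b := K ⟨M - 1, Nat.sub_lt hM one_pos⟩ with hb_def
  have hKa : ∀ i, a ≤ K i := fun i => hKmono.monotone (by simp [Fin.le_def])
  have hKb : ∀ i, K i ≤ b := fun i =>
    hKmono.monotone (by simp only [Fin.le_def]; omega)
  have ha2 : 2 ≤ a := hK1
  have hab : a ≤ b := hKa _
  have hb2 : 2 ≤ b := ha2.trans hab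
  -- real constants
  have hB2 : (2:ℝ) ≤ (b:ℝ) := by exact_mod_cast hb2
  have hB0 : (0:ℝ) < (b:ℝ) := by linarith
  set V : ℝ := 1 / (2 * (b:ℝ)) with hV_def
  have hV0 : 0 < V := by positivity
  set δ : ℝ := 1 / (4 * (b:ℝ) ^ 2) with hδ_def
  have hδ0 : 0 < δ := by positivity
  have hδB : δ * (b:ℝ) = V / 2 := by
    rw [hδ_def, hV_def]; field_simp; ring
  have hδV : δ < V := by
    rw [hδ_def, hV_def]
    apply div_lt_div_of_pos_left one_pos (by positivity)
    nlinarith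
  set r : ℝ := 1 - 1 / (2 * (b:ℝ)) with hr_def
  have hr0 : 0 < r := by
    rw [hr_def]
    have h4 : 1 / (2 * (b:ℝ)) ≤ 1 / 4 := by
      rw [div_le_div_iff₀ (by positivity) (by norm_num)]
      linarith
    linarith
  have hr1 : r < 1 := by
    rw [hr_def]
    have : 0 < 1 / (2 * (b:ℝ)) := by positivity
    linarith
  -- distance to the node set
  have hne : (Finset.univ : Finset (Fin M)).Nonempty := ⟨⟨0, hM⟩, Finset.mem_univ _⟩
  set d : ℕ → ℕ := fun ℓ => Finset.univ.inf' hne fun i => Nat.dist ℓ (K i) with hd_def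
  have hd_le : ∀ ℓ i, d ℓ ≤ Nat.dist ℓ (K i) := fun ℓ i =>
    Finset.inf'_le _ (Finset.mem_univ i)
  have hd_ex : ∀ ℓ, ∃ i, d ℓ = Nat.dist ℓ (K i) := by
    intro ℓ
    obtain ⟨i, _, h⟩ := Finset.exists_mem_eq_inf' hne fun i => Nat.dist ℓ (K i)
    exact ⟨i, h⟩
  have hdK : ∀ i, d (K i) = 0 := fun i =>
    Nat.le_zero.mp (by simpa [Nat.dist_self] using hd_le (K i) i)
  have hd0 : ∀ ℓ, d ℓ = 0 → ∃ i, ℓ = K i := by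
    intro ℓ h
    obtain ⟨i, hi⟩ := hd_ex ℓ
    exact ⟨i, Nat.eq_of_dist_eq_zero (by omega)⟩
  have hd_lip : ∀ ℓ, d (ℓ + 1) ≤ d ℓ + 1 := by
    intro ℓ
    obtain ⟨i, hi⟩ := hd_ex ℓ
    calc d (ℓ + 1) ≤ Nat.dist (ℓ + 1) (K i) := hd_le _ i
      _ ≤ Nat.dist (ℓ + 1) ℓ + Nat.dist ℓ (K i) := Nat.dist.triangle_inequality _ _ _
      _ = d ℓ + 1 := by
          rw [Nat.dist_eq_sub_of_le_right (Nat.le_succ ℓ), hi]; omega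
  -- the cumulative distribution function
  set f : ℕ → ℝ := fun ℓ =>
    if ℓ = 0 then 0
    else if ℓ ≤ a then V * a * ((ℓ : ℝ) - 1) / ((a : ℝ) - 1)
    else if ℓ ≤ b then V * ℓ - δ * d ℓ
    else 1 - (1/2) * r ^ (ℓ - b) with hf_def
  have hA2 : (2:ℝ) ≤ (a:ℝ) := by exact_mod_cast ha2
  have hA1 : (0:ℝ) < (a:ℝ) - 1 := by linarith
  have hf0 : f 0 = 0 := by simp [hf_def]
  have hf1 : ∀ ℓ, 1 ≤ ℓ → ℓ ≤ a → f ℓ = V * a * ((ℓ : ℝ) - 1) / ((a : ℝ) - 1) := by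
    intro ℓ h1 h2
    simp only [hf_def]
    rw [if_neg (by omega), if_pos h2]
  have hf2 : ∀ ℓ, a ≤ ℓ → ℓ ≤ b → f ℓ = V * ℓ - δ * d ℓ := by
    intro ℓ h1 h2
    rcases eq_or_lt_of_le h1 with h | h
    · have hda : d a = 0 := hdK ⟨0, hM⟩
      rw [← h, hf1 a (by omega) le_rfl, hda]
      push_cast
      field_simp
      ring
    · simp only [hf_def]
      rw [if_neg (by omega), if_neg (by omega), if_pos h2]
  have hVb : V * (b:ℝ) = 1/2 := by rw [hV_def]; field_simp
  have hf3 : ∀ ℓ, b ≤ ℓ → f ℓ = 1 - (1/2) * r ^ (ℓ - b) := by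
    intro ℓ h
    rcases eq_or_lt_of_le h with h' | h'
    · have hdb : d b = 0 := hdK ⟨M - 1, Nat.sub_lt hM one_pos⟩
      rw [← h', hf2 b hab le_rfl, hdb, Nat.sub_self, pow_zero]
      rw [hVb]; norm_num
    · simp only [hf_def]
      rw [if_neg (by omega), if_neg (by omega), if_neg (by omega)]
  have hf1' : f 1 = 0 := by
    rw [hf1 1 le_rfl (by omega)]
    push_cast; ring
  clear_value f d V δ r
  -- strict monotonicity of f on ℓ ≥ 1
  have hstep : ∀ ℓ, 1 ≤ ℓ → f ℓ < f (ℓ + 1) := by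
    intro ℓ h1
    rcases lt_or_ge ℓ a with hc | hc
    · rw [hf1 ℓ h1 hc.le, hf1 (ℓ+1) (by omega) hc]
      have hℓ : ((ℓ:ℝ) + 1) = ((ℓ+1 : ℕ) : ℝ) := by push_cast; ring
      rw [div_lt_div_iff_of_pos_right hA1]
      push_cast
      nlinarith [hV0, hA2]
    · rcases lt_or_ge ℓ b with hcb | hcb
      · rw [hf2 ℓ hc hcb.le, hf2 (ℓ+1) (by omega) hcb]
        have hlip : ((d (ℓ+1) : ℝ)) ≤ (d ℓ : ℝ) + 1 := by exact_mod_cast hd_lip ℓ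
        push_cast
        nlinarith [hδ0, hδV]
      · rw [hf3 ℓ hcb, hf3 (ℓ+1) (by omega)]
        have ht : ℓ + 1 - b = (ℓ - b) + 1 := by omega
        rw [ht, pow_succ]
        have hrp : 0 < r ^ (ℓ - b) := pow_pos hr0 _
        nlinarith [hrp, hr1]
  -- nodes achieve equality
  have hnode : ∀ i, f (K i) = V * (K i) := by
    intro i
    rw [hf2 _ (hKa i) (hKb i), hdK i]
    push_cast; ring
  -- strict inequality off the nodes
  have hlt : ∀ ℓ, 1 ≤ ℓ → (¬ ∃ i, ℓ = K i) → f ℓ < V * ℓ := by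
    intro ℓ h1 hn
    rcases lt_or_ge ℓ a with hc | hc
    · rw [hf1 ℓ h1 hc.le, div_lt_iff₀ hA1]
      have hℓa : (ℓ:ℝ) < (a:ℝ) := by exact_mod_cast hc
      have hℓ1 : (1:ℝ) ≤ (ℓ:ℝ) := by exact_mod_cast h1
      nlinarith [hV0]
    · rcases le_or_gt ℓ b with hcb | hcb
      · rw [hf2 ℓ hc hcb]
        have hd1 : d ℓ ≠ 0 := fun h => hn (hd0 ℓ h)
        have hd1' : (1:ℝ) ≤ (d ℓ : ℝ) := by
          exact_mod_cast Nat.one_le_iff_ne_zero.mpr hd1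
        nlinarith [hδ0]
      · rw [hf3 ℓ hcb.le]
        have ht1 : 1 ≤ ℓ - b := by omega
        have hcast : (ℓ:ℝ) = (b:ℝ) + ((ℓ - b : ℕ) : ℝ) := by
          rw [Nat.cast_sub hcb.le]; ring
        have hbern : 1 + ((ℓ - b : ℕ) : ℝ) * (-(1/(2*(b:ℝ)))) ≤
            (1 + (-(1/(2*(b:ℝ)))))^(ℓ - b) := one_add_mul_le_pow (by
          have : 0 < 1/(2*(b:ℝ)) := by positivity
          linarith) _
        have hr_eq : r = 1 + (-(1/(2*(b:ℝ)))) := by rw [hr_def]; ring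
        have htR : (1:ℝ) ≤ ((ℓ - b : ℕ) : ℝ) := by exact_mod_cast ht1
        have hu0 : (0:ℝ) < 1/(2*(b:ℝ)) := by positivity
        have huB : 1/(2*(b:ℝ)) * (b:ℝ) = 1/2 := by field_simp
        have htu : 0 < ((ℓ - b : ℕ) : ℝ) * (1/(2*(b:ℝ))) := by positivity
        rw [hr_eq, hcast, hV_def]
        have hrt : 1 - ((ℓ - b : ℕ) : ℝ) * (1/(2*(b:ℝ))) ≤
            (1 + (-(1/(2*(b:ℝ)))))^(ℓ - b) := by linarith [hbern]
        have hVexp : 1/(2*(b:ℝ)) * ((b:ℝ) + ((ℓ - b : ℕ) : ℝ)) =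
            1/2 + ((ℓ - b : ℕ) : ℝ) * (1/(2*(b:ℝ))) := by
          rw [mul_add, huB]; ring
        rw [hVexp]
        nlinarith [hrt, htu]
  have hub : ∀ ℓ, 1 ≤ ℓ → f ℓ ≤ V * ℓ := by
    intro ℓ h1
    by_cases h : ∃ i, ℓ = K i
    · obtain ⟨i, rfl⟩ := h
      exact (hnode i).le
    · exact (hlt ℓ h1 h).le
  -- the pmf
  refine ⟨fun m => f (m+1) - f m, ?_, ?_, ?_, ?_⟩
  · -- σ 0 = 0
    show f (0 + 1) - f 0 = 0
    rw [hf1', hf0]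
    ring
  · intro k hk
    have := hstep k hk
    show 0 < f (k + 1) - f k
    linarith
  · -- HasSum
    have hsum : ∀ n, (∑ m ∈ Finset.range n, (f (m+1) - f m)) = f n := by
      intro n
      rw [Finset.sum_range_sub, hf0, sub_zero]
    have hnn : ∀ m, 0 ≤ f (m+1) - f m := by
      intro m
      rcases Nat.eq_zero_or_pos m with h | h
      · subst h
        rw [hf1', hf0]
        norm_num
      · linarith [hstep m h]
    rw [hasSum_iff_tendsto_nat_of_nonneg hnn 1]
    have h0 : Filter.Tendsto (fun n : ℕ => r ^ n) Filter.atTop (nhds 0) :=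
      tendsto_pow_atTop_nhds_zero_of_lt_one hr0.le hr1
    have h1 : Filter.Tendsto (fun n : ℕ => n - b) Filter.atTop Filter.atTop :=
      Filter.tendsto_atTop_atTop.mpr fun n => ⟨n + b, fun m hm => by omega⟩
    have h2 : Filter.Tendsto (fun n : ℕ => 1 - (1/2) * r ^ (n - b))
        Filter.atTop (nhds 1) := by
      have := ((h0.comp h1).const_mul (1/2 : ℝ)).const_sub 1
      simpa using this
    apply h2.congr'
    filter_upwards [Filter.eventually_ge_atTop b] with n hn
    rw [hsum n, hf3 n hn]
  · -- the maximizer set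
    have hsum : ∀ n, (∑ m ∈ Finset.range n, (f (m+1) - f m)) = f n := by
      intro n
      rw [Finset.sum_range_sub, hf0, sub_zero]
    ext ℓ
    simp only [Set.mem_setOf_eq, Set.mem_range, hsum]
    constructor
    · rintro ⟨h1, hmax⟩
      have ha0 : (0:ℝ) < (a:ℝ) := by linarith
      have hfa : f a = V * a := hnode ⟨0, hM⟩
      have h2 := hmax a (by omega)
      rw [hfa] at h2
      have hVa : V * (a:ℝ) / (a:ℝ) = V := by field_simp
      rw [hVa] at h2
      by_contra hn
      have hℓ0 : (0:ℝ) < (ℓ:ℝ) := by exact_mod_cast h1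
      have hstrict := hlt ℓ h1 (fun ⟨i, hi⟩ => hn ⟨i, hi.symm⟩)
      have : f ℓ / ℓ < V := by rw [div_lt_iff₀ hℓ0]; linarith
      linarith
    · rintro ⟨i, rfl⟩
      have h1 : 1 ≤ K i := by have := hKa i; omega
      refine ⟨h1, ?_⟩
      intro ℓ' h1'
      have hKi0 : (0:ℝ) < ((K i : ℕ):ℝ) := by exact_mod_cast h1
      have hℓ'0 : (0:ℝ) < (ℓ':ℝ) := by exact_mod_cast h1'
      rw [hnode i]
      have hVK : V * ((K i : ℕ):ℝ) / ((K i : ℕ):ℝ) = V := by field_simp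
      rw [hVK, div_le_iff₀ hℓ'0]
      exact hub ℓ' h1'
end

section
/- In the two-player game with A₁ = A₂ = ℕ ∪ {∞} and symmetric payoffs given by u₁(m,n) = 1/m if m = n+1 with m,n finite, and 0 otherwise (and u₁(·,∞) = u₁(∞,·) = 0), played with countably additive strategies, the unique Nash equilibrium is the pure strategy pair (∞,∞), and the action ∞ is weakly dominated by every pure action a ≥ 2. -/
/-- The action set `ℕ ∪ {∞}`, where `ℕ = {1,2,…}`. -/
abbrev Act := WithTop ℕ+

open Classical in
/-- Player 1's payoff: `u₁(m,n) = 1/m` if `m = n + 1` with `m, n` finite, and `0` otherwise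
(in particular `u₁(·,∞) = u₁(∞,·) = 0`). -/
noncomputable def u13 (a b : Act) : ℝ :=
  match a, b with
  | (m : ℕ+), (n : ℕ+) => if m = n + 1 then 1 / ((m : ℕ) : ℝ) else 0
  | _, _ => 0

/-- A countably additive strategy on the countable action set, given by its probability
mass function. -/
def IsPmf (σ : Act → ℝ) : Prop := (∀ a, 0 ≤ σ a) ∧ HasSum σ 1

/-- Expected payoff of player 1. -/
noncomputable def V1 (σ₁ σ₂ : Act → ℝ) : ℝ := ∑' a, ∑' b, σ₁ a * σ₂ b * u13 a b

/-- Expected payoff of player 2 (the game is symmetric). -/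
noncomputable def V2 (σ₁ σ₂ : Act → ℝ) : ℝ := ∑' a, ∑' b, σ₁ a * σ₂ b * u13 b a

open Classical in
/-- The Dirac strategy on `∞`. -/
noncomputable def diracTop : Act → ℝ := fun a => if a = ⊤ then 1 else 0

namespace NashAux

open Classical

lemma u13_coe (m n : ℕ+) : u13 (↑m) (↑n) = if m = n + 1 then 1 / ((m : ℕ) : ℝ) else 0 := rfl

lemma u13_top_left (b : Act) : u13 ⊤ b = 0 := rfl

lemma u13_top_right (a : Act) : u13 a ⊤ = 0 := by
  cases a using WithTop.recTopCoe <;> rfl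

lemma one_ne_succ (j : ℕ+) : (1:ℕ+) ≠ j + 1 := by
  intro h
  have h2 : ((1:ℕ+):ℕ) = ((j+1 : ℕ+):ℕ) := congrArg _ h
  rw [PNat.add_coe, PNat.one_coe] at h2
  have := j.pos; omega

lemma u13_nonneg (a b : Act) : 0 ≤ u13 a b := by
  cases a using WithTop.recTopCoe with
  | top => rw [u13_top_left]
  | coe m =>
    cases b using WithTop.recTopCoe with
    | top => rw [u13_top_right]
    | coe n =>
      rw [u13_coe]
      split
      · positivity
      · exact le_refl 0

lemma u13_le_one (a b : Act) : u13 a b ≤ 1 := by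
  cases a using WithTop.recTopCoe with
  | top => rw [u13_top_left]; norm_num
  | coe m =>
    cases b using WithTop.recTopCoe with
    | top => rw [u13_top_right]; norm_num
    | coe n =>
      rw [u13_coe]
      split
      · rw [div_le_one (by exact_mod_cast m.pos)]
        exact_mod_cast m.one_le
      · norm_num

/-- The expected payoff to the pure action `a` against strategy `τ`. -/
noncomputable def W (τ : Act → ℝ) (a : Act) : ℝ := ∑' b, τ b * u13 a b

lemma W_top (τ : Act → ℝ) : W τ ⊤ = 0 := by
  have : ∀ b : Act, τ b * u13 ⊤ b = 0 := fun b => by rw [u13_top_left, mul_zero]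
  exact (tsum_congr this).trans tsum_zero

lemma W_one (τ : Act → ℝ) : W τ ((1:ℕ+) : Act) = 0 := by
  have : ∀ b : Act, τ b * u13 ((1:ℕ+) : Act) b = 0 := by
    intro b
    cases b using WithTop.recTopCoe with
    | top => rw [u13_top_right, mul_zero]
    | coe j => rw [u13_coe, if_neg (one_ne_succ j), mul_zero]
  exact (tsum_congr this).trans tsum_zero

lemma W_succ (τ : Act → ℝ) (k : ℕ+) :
    W τ ((↑(k+1) : Act)) = τ (↑k) * (1 / ((k : ℕ) + 1 : ℝ)) := by
  unfold W
  rw [tsum_eq_single (↑k : Act) ?_]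
  · rw [u13_coe, if_pos rfl]
    norm_num [PNat.add_coe]
  · intro b hb
    cases b using WithTop.recTopCoe with
    | top => rw [u13_top_right, mul_zero]
    | coe j =>
      have hjk : j ≠ k := by
        intro h; exact hb (by rw [h])
      rw [u13_coe, if_neg (fun h => hjk (add_right_cancel h).symm), mul_zero]

lemma W_nonneg (τ : Act → ℝ) (hτ : ∀ b, 0 ≤ τ b) (a : Act) : 0 ≤ W τ a :=
  tsum_nonneg fun b => mul_nonneg (hτ b) (u13_nonneg a b)

lemma V1_eq (σ τ : Act → ℝ) : V1 σ τ = ∑' a, σ a * W τ a := by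
  unfold V1 W
  exact tsum_congr fun a => by
    rw [← tsum_mul_left]
    exact tsum_congr fun b => (mul_assoc _ _ _)

/-- Dirac strategy at a pure action. -/
noncomputable def dirac (m : Act) : Act → ℝ := fun a => if a = m then 1 else 0

lemma dirac_pmf (m : Act) : IsPmf (dirac m) :=
  ⟨fun a => by unfold dirac; split <;> norm_num, hasSum_ite_eq m 1⟩

lemma V1_dirac (m : Act) (τ : Act → ℝ) : V1 (dirac m) τ = W τ m := by
  rw [V1_eq]
  rw [tsum_eq_single m (fun a ha => by simp [dirac, ha])]
  simp [dirac]

lemma V1_nonneg (σ τ : Act → ℝ) (hσ : ∀ a, 0 ≤ σ a) (hτ : ∀ a, 0 ≤ τ a) : 0 ≤ V1 σ τ := by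
  rw [V1_eq]
  exact tsum_nonneg fun a => mul_nonneg (hσ a) (W_nonneg τ hτ a)

lemma V2_eq (σ τ : Act → ℝ) (hσ : IsPmf σ) (hτ : IsPmf τ) : V2 σ τ = V1 τ σ := by
  have hsum : Summable (Function.uncurry (fun a b => σ a * τ b * u13 b a)) := by
    apply Summable.of_nonneg_of_le
      (g := fun p : Act × Act => σ p.1 * τ p.2 * u13 p.2 p.1)
      (f := fun p : Act × Act => σ p.1 * τ p.2)
    · intro p
      exact mul_nonneg (mul_nonneg (hσ.1 _) (hτ.1 _)) (u13_nonneg _ _)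
    · intro p
      have h1 : 0 ≤ σ p.1 * τ p.2 := mul_nonneg (hσ.1 _) (hτ.1 _)
      calc σ p.1 * τ p.2 * u13 p.2 p.1 ≤ σ p.1 * τ p.2 * 1 :=
            mul_le_mul_of_nonneg_left (u13_le_one _ _) h1
        _ = σ p.1 * τ p.2 := mul_one _
    · exact hσ.2.summable.mul_of_nonneg hτ.2.summable hσ.1 hτ.1
  calc V2 σ τ = ∑' a, ∑' b, σ a * τ b * u13 b a := rfl
    _ = ∑' b, ∑' a, σ a * τ b * u13 b a := (Summable.tsum_comm hsum).symm
    _ = V1 τ σ := tsum_congr fun b => tsum_congr fun a => by ring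

lemma support_eq (σ τ : Act → ℝ) (hσ : IsPmf σ) (hτ : IsPmf τ)
    (hb : ∀ a, W τ a ≤ V1 σ τ) (a : Act) (ha : 0 < σ a) : W τ a = V1 σ τ := by
  by_contra hne
  set v := V1 σ τ with hv
  have hlt : W τ a < v := lt_of_le_of_ne (hb a) hne
  have hg : Summable (fun a => σ a * v) := hσ.2.summable.mul_right v
  have hle : ∀ a', σ a' * W τ a' ≤ σ a' * v :=
    fun a' => mul_le_mul_of_nonneg_left (hb a') (hσ.1 a')
  have hf : Summable (fun a' => σ a' * W τ a') :=
    Summable.of_nonneg_of_le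
      (fun a' => mul_nonneg (hσ.1 a') (W_nonneg τ hτ.1 a')) hle hg
  have hi : σ a * W τ a < σ a * v := (mul_lt_mul_iff_right₀ ha).2 hlt
  have hltsum : ∑' a', σ a' * W τ a' < ∑' a', σ a' * v := Summable.tsum_lt_tsum hle hi hf hg
  rw [← V1_eq, tsum_mul_right, hσ.2.tsum_eq, one_mul] at hltsum
  exact lt_irrefl v hltsum

lemma exists_pos (σ : Act → ℝ) (hσ : IsPmf σ) (h : σ ≠ diracTop) : ∃ n : ℕ+, 0 < σ (↑n) := by
  by_contra h'
  push_neg at h'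
  have hz : ∀ n : ℕ+, σ (↑n) = 0 := fun n => le_antisymm (h' n) (hσ.1 _)
  apply h
  have heq : σ = fun a => if a = (⊤ : Act) then σ ⊤ else 0 := by
    funext a
    cases a using WithTop.recTopCoe with
    | top => simp
    | coe n => simp [hz n]
  have htop : σ ⊤ = 1 := by
    have h1 : HasSum σ (σ ⊤) := by
      rw [heq]; exact hasSum_ite_eq ⊤ (σ ⊤)
    exact h1.unique hσ.2
  funext a
  cases a using WithTop.recTopCoe with
  | top => simp [diracTop, htop]
  | coe n => simp [diracTop, hz n]

lemma V1_diracTop_right (σ : Act → ℝ) : V1 σ diracTop = 0 := by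
  unfold V1
  have : ∀ a b : Act, σ a * diracTop b * u13 a b = 0 := by
    intro a b
    cases b using WithTop.recTopCoe with
    | top => rw [u13_top_right, mul_zero]
    | coe n => simp [diracTop]
  exact (tsum_congr fun a => (tsum_congr (this a)).trans tsum_zero).trans tsum_zero

lemma V2_diracTop_left (τ : Act → ℝ) : V2 diracTop τ = 0 := by
  unfold V2
  have : ∀ a b : Act, diracTop a * τ b * u13 b a = 0 := by
    intro a b
    cases a using WithTop.recTopCoe with
    | top => rw [u13_top_right, mul_zero]
    | coe n => simp [diracTop]
  exact (tsum_congr fun a => (tsum_congr (this a)).trans tsum_zero).trans tsum_zero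

lemma half (σ₁ σ₂ : Act → ℝ) (h₁ : IsPmf σ₁) (h₂ : IsPmf σ₂)
    (b1 : ∀ a : Act, W σ₂ a ≤ V1 σ₁ σ₂) (b2 : ∀ a : Act, W σ₁ a ≤ V1 σ₂ σ₁) :
    σ₂ = diracTop := by
  by_contra hne
  obtain ⟨n₀, hn₀⟩ := exists_pos σ₂ h₂ hne
  have hv₁ : 0 < V1 σ₁ σ₂ := by
    refine lt_of_lt_of_le ?_ (b1 (↑(n₀+1)))
    rw [W_succ]
    positivity
  -- σ₁ puts positive mass on some finite action
  have hex : ∀ (σ τ : Act → ℝ), IsPmf σ → IsPmf τ → 0 < V1 σ τ → ∃ m : ℕ+, 0 < σ (↑m) := by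
    intro σ τ hσ hτ hv
    have : ∃ a : Act, 0 < σ a * W τ a := by
      by_contra hc
      push_neg at hc
      have hz : ∀ a, σ a * W τ a = 0 := fun a =>
        le_antisymm (hc a) (mul_nonneg (hσ.1 a) (W_nonneg τ hτ.1 a))
      rw [V1_eq] at hv
      simp [hz] at hv
    obtain ⟨a, ha⟩ := this
    have hσa : 0 < σ a := by
      rcases lt_or_ge 0 (σ a) with h | h
      · exact h
      · exfalso
        have : σ a = 0 := le_antisymm h (hσ.1 a)
        rw [this, zero_mul] at ha; exact lt_irrefl 0 ha
    have hWa : 0 < W τ a := by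
      rcases lt_or_ge 0 (W τ a) with h | h
      · exact h
      · exfalso
        have : W τ a = 0 := le_antisymm h (W_nonneg τ hτ.1 a)
        rw [this, mul_zero] at ha; exact lt_irrefl 0 ha
    cases a using WithTop.recTopCoe with
    | top => rw [W_top] at hWa; exact absurd hWa (lt_irrefl 0)
    | coe m => exact ⟨m, hσa⟩
  obtain ⟨m₁, hm₁⟩ := hex σ₁ σ₂ h₁ h₂ hv₁
  have hv₂ : 0 < V1 σ₂ σ₁ := by
    refine lt_of_lt_of_le ?_ (b2 (↑(m₁+1)))
    rw [W_succ]
    positivity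
  -- support characterizations
  have wpos : ∀ (σ τ : Act → ℝ), IsPmf τ → ∀ n : ℕ+, 0 < W τ (↑n) →
      ∃ k : ℕ+, n = k + 1 ∧ 0 < τ (↑k) := by
    intro σ τ hτ n hW
    rcases eq_or_ne n 1 with rfl | hn1
    · rw [W_one] at hW; exact absurd hW (lt_irrefl 0)
    · obtain ⟨k, rfl⟩ := PNat.exists_eq_succ_of_ne_one hn1
      refine ⟨k, rfl, ?_⟩
      rw [W_succ] at hW
      by_contra hc
      push_neg at hc
      have : τ (↑k) = 0 := le_antisymm hc (hτ.1 _)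
      rw [this, zero_mul] at hW; exact lt_irrefl 0 hW
  have P1 : ∀ n : ℕ+, 0 < σ₁ (↑n) → ∃ k : ℕ+, n = k + 1 ∧ 0 < σ₂ (↑k) := by
    intro n hn
    have hW := support_eq σ₁ σ₂ h₁ h₂ b1 (↑n) hn
    exact wpos σ₁ σ₂ h₂ n (hW ▸ hv₁)
  have P2 : ∀ n : ℕ+, 0 < σ₂ (↑n) → ∃ k : ℕ+, n = k + 1 ∧ 0 < σ₁ (↑k) := by
    intro n hn
    have hW := support_eq σ₂ σ₁ h₂ h₁ b2 (↑n) hn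
    exact wpos σ₂ σ₁ h₁ n (hW ▸ hv₂)
  -- infinite descent
  have descent : ∀ N : ℕ, ∀ n : ℕ+, (n : ℕ) ≤ N → ¬ 0 < σ₁ (↑n) := by
    intro N
    induction N with
    | zero => intro n hn _; have := n.pos; omega
    | succ N ih =>
      intro n hn hpos
      obtain ⟨k, hnk, hk⟩ := P1 n hpos
      obtain ⟨j, hkj, hj⟩ := P2 k hk
      have hc1 : (n : ℕ) = (k : ℕ) + 1 := by rw [hnk, PNat.add_coe, PNat.one_coe]
      have hc2 : (k : ℕ) = (j : ℕ) + 1 := by rw [hkj, PNat.add_coe, PNat.one_coe]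
      exact ih j (by omega) hj
  exact descent (m₁ : ℕ) m₁ le_rfl hm₁

end NashAux

open NashAux in
/-- In the symmetric two-player game on `ℕ ∪ {∞}` with `u₁(m,n) = 1/m` iff `m = n+1`, played
with countably additive strategies, the unique Nash equilibrium is `(∞, ∞)`, and the action
`∞` is weakly dominated by every pure action `a ≥ 2`. -/
theorem unique_nash_in_dominated_strategies :
    (∀ σ₁ σ₂ : Act → ℝ, IsPmf σ₁ → IsPmf σ₂ →
      (((∀ τ₁ : Act → ℝ, IsPmf τ₁ → V1 τ₁ σ₂ ≤ V1 σ₁ σ₂) ∧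
        (∀ τ₂ : Act → ℝ, IsPmf τ₂ → V2 σ₁ τ₂ ≤ V2 σ₁ σ₂)) ↔
        (σ₁ = diracTop ∧ σ₂ = diracTop))) ∧
    (∀ m : ℕ+, 2 ≤ m →
      (∀ c : Act, u13 ⊤ c ≤ u13 (m : Act) c) ∧ (∃ c : Act, u13 ⊤ c < u13 (m : Act) c)) := by
  constructor
  · intro σ₁ σ₂ h₁ h₂
    constructor
    · rintro ⟨hb1, hb2⟩
      have b1 : ∀ a : Act, W σ₂ a ≤ V1 σ₁ σ₂ := fun a => by
        rw [← V1_dirac]; exact hb1 _ (dirac_pmf a)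
      have b2 : ∀ a : Act, W σ₁ a ≤ V1 σ₂ σ₁ := fun a => by
        have := hb2 (dirac a) (dirac_pmf a)
        rw [V2_eq σ₁ (dirac a) h₁ (dirac_pmf a), V2_eq σ₁ σ₂ h₁ h₂, V1_dirac] at this
        exact this
      exact ⟨half σ₂ σ₁ h₂ h₁ b2 b1, half σ₁ σ₂ h₁ h₂ b1 b2⟩
    · rintro ⟨rfl, rfl⟩
      constructor
      · intro τ _
        rw [V1_diracTop_right, V1_diracTop_right]
      · intro τ _
        rw [V2_diracTop_left, V2_diracTop_left]
  · intro m hm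
    constructor
    · intro c
      rw [u13_top_left]
      exact u13_nonneg _ _
    · obtain ⟨k, rfl⟩ := PNat.exists_eq_succ_of_ne_one (n := m) (by rintro rfl; norm_num at hm)
      refine ⟨(↑k : Act), ?_⟩
      rw [u13_top_left, u13_coe, if_pos rfl]
      have : (0:ℝ) < ((k+1 : ℕ+) : ℕ) := by exact_mod_cast (k+1).pos
      positivity
end

section
/- Let κ be a diffuse charge on (ℕ, 2^ℕ). Then κ is a hazy filter (a convex combination c·η + (1−c)·ξ, c ∈ (0,1], of two 0-1 valued diffuse charges η, ξ) if and only if for every partition of ℕ into three sets E₁, E₂, E₃, at least one Eᵢ satisfies κ(Eᵢ) = 0. -/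
/-- A charge is diffuse if every singleton has measure zero. -/
def Diffuse {α : Type*} (κ : Set α → ℝ) : Prop := ∀ a : α, κ {a} = 0

/-- An ultrafilter charge: a diffuse 0-1 valued charge. -/
def IsUltraCharge (κ : Set ℕ → ℝ) : Prop :=
  IsCharge κ ∧ Diffuse κ ∧ ∀ E : Set ℕ, κ E = 0 ∨ κ E = 1

/-- A hazy filter: a convex combination `c·η + (1-c)·ξ`, `c ∈ (0,1]`, of two ultrafilter
charges (the case `η = ξ`, i.e. an ultrafilter charge itself, is included). -/
def IsHazyFilter (κ : Set ℕ → ℝ) : Prop :=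
  ∃ c : ℝ, 0 < c ∧ c ≤ 1 ∧ ∃ η ξ : Set ℕ → ℝ, IsUltraCharge η ∧ IsUltraCharge ξ ∧
    ∀ E : Set ℕ, κ E = c * η E + (1 - c) * ξ E

/-- A diffuse charge `κ` on `(ℕ, 2^ℕ)` is a hazy filter precisely when for every partition
of `ℕ` into three sets `E₁, E₂, E₃`, at least one `Eᵢ` satisfies `κ(Eᵢ) = 0`. -/
theorem hazy_filter_iff_partition (κ : Set ℕ → ℝ) (hκ : IsCharge κ) (hd : Diffuse κ) :
    IsHazyFilter κ ↔
      ∀ E₁ E₂ E₃ : Set ℕ, Disjoint E₁ E₂ → Disjoint E₁ E₃ → Disjoint E₂ E₃ →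
        E₁ ∪ E₂ ∪ E₃ = Set.univ → (κ E₁ = 0 ∨ κ E₂ = 0 ∨ κ E₃ = 0) := by
  have mono : ∀ E G : Set ℕ, E ⊆ G → κ E ≤ κ G := by
    intro E G h
    have hdis : Disjoint E (G \ E) := Set.disjoint_sdiff_right
    have := hκ.additive E (G \ E) hdis
    rw [Set.union_diff_cancel h] at this
    have := hκ.nonneg (G \ E)
    linarith
  constructor
  · rintro ⟨c, hc0, hc1, η, ξ, ⟨hηc, hηd, hη01⟩, ⟨hξc, hξd, hξ01⟩, hκc⟩
    intro E₁ E₂ E₃ h12 h13 h23 hu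
    by_contra hcon
    push_neg at hcon
    obtain ⟨h1, h2, h3⟩ := hcon
    have d123 : Disjoint (E₁ ∪ E₂) E₃ := Set.disjoint_union_left.mpr ⟨h13, h23⟩
    have sumη : η E₁ + η E₂ + η E₃ = 1 := by
      rw [← hηc.additive E₁ E₂ h12, ← hηc.additive _ E₃ d123, hu, hηc.total]
    have sumξ : ξ E₁ + ξ E₂ + ξ E₃ = 1 := by
      rw [← hξc.additive E₁ E₂ h12, ← hξc.additive _ E₃ d123, hu, hξc.total]
    have key : ∀ E : Set ℕ, κ E ≠ 0 → 1 ≤ η E + ξ E := by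
      intro E hE
      rcases hη01 E with ha | ha <;> rcases hξ01 E with hb | hb
      · exact absurd (by rw [hκc E, ha, hb]; ring) hE
      all_goals nlinarith [hηc.nonneg E, hξc.nonneg E]
    have k1 := key E₁ h1
    have k2 := key E₂ h2
    have k3 := key E₃ h3
    linarith
  · intro hpart
    by_cases h01 : ∀ E : Set ℕ, κ E = 0 ∨ κ E = 1
    · exact ⟨1, one_pos, le_refl 1, κ, κ, ⟨hκ, hd, h01⟩, ⟨hκ, hd, h01⟩, fun E => by ring⟩
    push_neg at h01
    obtain ⟨A, hA0, hA1⟩ := h01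
    have hcompl : ∀ E : Set ℕ, κ Eᶜ = 1 - κ E := by
      intro E
      have := hκ.additive E Eᶜ disjoint_compl_right
      rw [Set.union_compl_self, hκ.total] at this
      linarith
    have hcpos : 0 < κ A := lt_of_le_of_ne (hκ.nonneg A) (Ne.symm hA0)
    have hAle : κ A ≤ 1 := by
      have := hκ.nonneg Aᶜ
      rw [hcompl A] at this
      linarith
    have hclt : κ A < 1 := lt_of_le_of_ne hAle hA1
    have hAcpos : 0 < κ Aᶜ := by rw [hcompl]; linarith
    have key : ∀ B E : Set ℕ, 0 < κ Bᶜ → κ (E ∩ B) = 0 ∨ κ (E ∩ B) = κ B := by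
      intro B E hBc
      have d1 : Disjoint (E ∩ B) (B \ E) := by
        rw [Set.disjoint_left]
        rintro x ⟨hxE, _⟩ ⟨_, hxE'⟩
        exact hxE' hxE
      have d2 : Disjoint (E ∩ B) Bᶜ := by
        rw [Set.disjoint_left]
        rintro x ⟨_, hxB⟩ hx
        exact hx hxB
      have d3 : Disjoint (B \ E) Bᶜ := by
        rw [Set.disjoint_left]
        rintro x ⟨hxB, _⟩ hx
        exact hx hxB
      have hu : (E ∩ B) ∪ (B \ E) ∪ Bᶜ = Set.univ := by
        ext x
        by_cases hx : x ∈ B <;> by_cases hx' : x ∈ E <;> simp [hx, hx']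
      have hsum : κ (E ∩ B) + κ (B \ E) = κ B := by
        have h := hκ.additive (E ∩ B) (B \ E) d1
        rw [show (E ∩ B) ∪ (B \ E) = B from by ext x; by_cases hx' : x ∈ E <;> simp [hx']] at h
        linarith
      rcases hpart (E ∩ B) (B \ E) Bᶜ d1 d2 d3 hu with h | h | h
      · exact Or.inl h
      · exact Or.inr (by linarith)
      · exact absurd h (by linarith)
    have mkUltra : ∀ B : Set ℕ, 0 < κ B → 0 < κ Bᶜ →
        IsUltraCharge (fun E => κ (E ∩ B) / κ B) := by
      intro B hB hBc
      refine ⟨⟨?_, ?_, ?_, ?_⟩, ?_, ?_⟩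
      · intro E; exact div_nonneg (hκ.nonneg _) hB.le
      · simp only [Set.empty_inter, hκ.empty, zero_div]
      · simp only [Set.univ_inter]; exact div_self hB.ne'
      · intro E G hEG
        have hdis : Disjoint (E ∩ B) (G ∩ B) :=
          hEG.mono Set.inter_subset_left Set.inter_subset_left
        show κ ((E ∪ G) ∩ B) / κ B = κ (E ∩ B) / κ B + κ (G ∩ B) / κ B
        rw [Set.union_inter_distrib_right, hκ.additive _ _ hdis, add_div]
      · intro a
        have h1 : κ ({a} ∩ B) ≤ κ {a} := mono _ _ Set.inter_subset_left
        have h2 : 0 ≤ κ ({a} ∩ B) := hκ.nonneg _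
        have h3 := hd a
        show κ ({a} ∩ B) / κ B = 0
        rw [div_eq_zero_iff]
        left; linarith
      · intro E
        rcases key B E hBc with h | h
        · left; show κ (E ∩ B) / κ B = 0; rw [h, zero_div]
        · right; show κ (E ∩ B) / κ B = 1; rw [h]; exact div_self hB.ne'
    have hAA : 0 < κ Aᶜᶜ := by rwa [compl_compl]
    refine ⟨κ A, hcpos, hAle, fun E => κ (E ∩ A) / κ A, fun E => κ (E ∩ Aᶜ) / κ Aᶜ,
      mkUltra A hcpos hAcpos, mkUltra Aᶜ hAcpos hAA, ?_⟩
    intro E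
    have hsplit : κ (E ∩ A) + κ (E ∩ Aᶜ) = κ E := by
      have hdis : Disjoint (E ∩ A) (E ∩ Aᶜ) := by
        rw [Set.disjoint_left]
        rintro x ⟨_, hxA⟩ ⟨_, hx⟩
        exact hx hxA
      have h := hκ.additive (E ∩ A) (E ∩ Aᶜ) hdis
      rw [Set.inter_union_compl] at h
      linarith
    rw [hcompl A]
    have e1 : κ A * (κ (E ∩ A) / κ A) = κ (E ∩ A) := by field_simp
    have e2 : (1 - κ A) * (κ (E ∩ Aᶜ) / (1 - κ A)) = κ (E ∩ Aᶜ) := by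
      rw [mul_div_cancel₀]
      exact sub_ne_zero_of_ne (Ne.symm hA1)
    rw [e1, e2]
    linarith
end

section
/- Let X be a set, F a field on X, G a subfield of F, and ζ a finitely additive probability measure on G. Then ζ extends to a finitely additive probability measure on F. Consequently, if φ : A → B is a surjective map measurable with respect to fields F on A and G on B, then the induced pushforward map Φ from charges on (A,F) to charges on (B,G), Φ(κ)(G₀) = κ(φ⁻¹(G₀)), is surjective. -/
/-- A field of subsets of `X`. -/
structure IsSetField {X : Type*} (F : Set (Set X)) : Prop where
  empty_mem : ∅ ∈ F
  compl_mem : ∀ E ∈ F, Eᶜ ∈ F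
  union_mem : ∀ E ∈ F, ∀ G ∈ F, E ∪ G ∈ F

/-- A finitely additive probability measure (charge) on the field `F`. -/
structure IsChargeOn {X : Type*} (F : Set (Set X)) (σ : Set X → ℝ) : Prop where
  nonneg : ∀ E ∈ F, 0 ≤ σ E
  empty : σ ∅ = 0
  total : σ Set.univ = 1
  additive : ∀ E ∈ F, ∀ G ∈ F, Disjoint E G → σ (E ∪ G) = σ E + σ G

set_option linter.unusedSectionVars false
set_option linter.unusedVariables false
open scoped BoundedContinuousFunction

section Aux

variable {X : Type} [TopologicalSpace X] [DiscreteTopology X]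

/-- Indicator function as a bounded continuous function. -/
noncomputable def indBCF (E : Set X) : X →ᵇ ℝ :=
  BoundedContinuousFunction.ofNormedAddCommGroup (E.indicator 1)
    continuous_of_discreteTopology 1
    (by intro x; by_cases h : x ∈ E <;> simp [Set.indicator_apply, h])

@[simp] lemma indBCF_apply (E : Set X) (x : X) : indBCF E x = E.indicator 1 x := rfl

variable {G : Set (Set X)}

lemma IsSetField.univ_mem (hG : IsSetField G) : Set.univ ∈ G := by
  simpa using hG.compl_mem ∅ hG.empty_mem

lemma IsSetField.inter_mem (hG : IsSetField G) {E F : Set X} (hE : E ∈ G) (hF : F ∈ G) :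
    E ∩ F ∈ G := by
  have := hG.compl_mem _ (hG.union_mem _ (hG.compl_mem _ hE) _ (hG.compl_mem _ hF))
  simpa [Set.compl_union] using this

lemma charge_finset_union {ι : Type*} (hG : IsSetField G) {ζ : Set X → ℝ}
    (hζ : IsChargeOn G ζ) (u : Finset ι) (f : ι → Set X) (hf : ∀ i ∈ u, f i ∈ G)
    (hd : (u : Set ι).PairwiseDisjoint f) :
    (⋃ i ∈ u, f i) ∈ G ∧ ζ (⋃ i ∈ u, f i) = ∑ i ∈ u, ζ (f i) := by
  classical
  induction u using Finset.induction_on with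
  | empty => simp [hζ.empty, hG.empty_mem]
  | @insert a u ha ih =>
    have hfa : f a ∈ G := hf a (by simp)
    have ih' := ih (fun i hi => hf i (by simp [hi]))
      (hd.subset (by simp [Finset.coe_subset, Finset.subset_insert]))
    have hdis : Disjoint (f a) (⋃ i ∈ u, f i) := by
      rw [Set.disjoint_iUnion_right]
      intro i
      rw [Set.disjoint_iUnion_right]
      intro hi
      exact hd (by simp) (by simp [hi]) (fun h => ha (h ▸ hi))
    rw [Finset.set_biUnion_insert, Finset.sum_insert ha]
    exact ⟨hG.union_mem _ hfa _ ih'.1, by rw [hζ.additive _ hfa _ ih'.1 hdis, ih'.2]⟩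

open Classical in
/-- The atom of a finite family `s` determined by the subfamily `t`. -/
noncomputable def atomOf (s t : Finset (Set X)) : Set X :=
  ⋂ E ∈ s, if E ∈ t then E else Eᶜ

lemma mem_atomOf {s t : Finset (Set X)} {x : X} :
    x ∈ atomOf s t ↔ ∀ E ∈ s, (x ∈ E ↔ E ∈ t) := by
  classical
  simp only [atomOf, Set.mem_iInter]
  refine ⟨fun h E hE => ?_, fun h E hE => ?_⟩
  · have := h E hE
    by_cases ht : E ∈ t <;> simp [ht] at this ⊢ <;> tauto
  · by_cases ht : E ∈ t <;> simp [ht, h E hE]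

lemma atomOf_mem (hG : IsSetField G) (t : Finset (Set X)) :
    ∀ s : Finset (Set X), ↑s ⊆ G → atomOf s t ∈ G := by
  classical
  intro s
  induction s using Finset.induction_on with
  | empty => intro _; simpa [atomOf] using hG.univ_mem
  | @insert a u ha ih =>
    intro hs
    have haG : a ∈ G := hs (by simp)
    have h1 : (if a ∈ t then a else aᶜ) ∈ G := by
      split
      · exact haG
      · exact hG.compl_mem _ haG
    have h2 := ih (fun E hE => hs (by simp [hE]))
    have : atomOf (insert a u) t = (if a ∈ t then a else aᶜ) ∩ atomOf u t := by
      simp [atomOf, Set.biInter_insert]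
    rw [this]
    exact hG.inter_mem h1 h2

lemma atomOf_disjoint {s t t' : Finset (Set X)} (ht : t ⊆ s) (ht' : t' ⊆ s) (hne : t ≠ t') :
    Disjoint (atomOf s t) (atomOf s t') := by
  rw [Set.disjoint_left]
  intro x hx hx'
  rw [mem_atomOf] at hx hx'
  apply hne
  ext E
  constructor
  · intro h
    exact (hx' E (ht h)).1 ((hx E (ht h)).2 h)
  · intro h
    exact (hx E (ht' h)).1 ((hx' E (ht' h)).2 h)

section Core

variable {X : Type} [TopologicalSpace X] [DiscreteTopology X] {G : Set (Set X)}

lemma core_dominated [Nonempty X] (hG : IsSetField G) {ζ : Set X → ℝ} (hζ : IsChargeOn G ζ)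
    (c : Set X →₀ ℝ) (hc : ↑c.support ⊆ G) :
    Finsupp.linearCombination ℝ ζ c ≤ ⨆ x, (Finsupp.linearCombination ℝ indBCF c) x := by
  classical
  set f : X →ᵇ ℝ := Finsupp.linearCombination ℝ indBCF c with hf
  set s : Finset (Set X) := c.support with hs
  have hfx : ∀ x : X, f x = ∑ E ∈ s, if x ∈ E then c E else 0 := by
    intro x
    have h1 : f = ∑ E ∈ s, c E • indBCF E := by
      rw [hf, Finsupp.linearCombination_apply, Finsupp.sum]
    rw [h1]
    rw [BoundedContinuousFunction.coe_sum, Finset.sum_apply]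
    refine Finset.sum_congr rfl fun E _ => ?_
    by_cases h : x ∈ E <;>
      simp [Set.indicator_apply, h]
  set M : ℝ := ⨆ x, f x with hM
  have bdd : BddAbove (Set.range ⇑f) := f.isBounded_range.bddAbove
  have hMx : ∀ x, f x ≤ M := fun x => le_ciSup bdd x
  set P : Finset (Finset (Set X)) := s.powerset with hP
  have hPmem : ∀ t ∈ P, atomOf s t ∈ G := fun t _ => atomOf_mem hG t s hc
  have hPd : (↑P : Set (Finset (Set X))).PairwiseDisjoint (atomOf s) := by
    intro t ht t' ht' hne
    exact atomOf_disjoint (Finset.mem_powerset.1 ht) (Finset.mem_powerset.1 ht') hne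
  have hcover : (⋃ t ∈ P, atomOf s t) = Set.univ := by
    rw [Set.eq_univ_iff_forall]
    intro x
    rw [Set.mem_iUnion₂]
    refine ⟨s.filter (x ∈ ·), Finset.mem_powerset.2 (Finset.filter_subset _ _), ?_⟩
    rw [mem_atomOf]
    intro E hE
    simp [Finset.mem_filter, hE]
  have hsum1 : ∑ t ∈ P, ζ (atomOf s t) = 1 := by
    have := (charge_finset_union hG hζ P (atomOf s) hPmem hPd).2
    rw [hcover, hζ.total] at this
    exact this.symm
  have hE : ∀ E ∈ s, ζ E = ∑ t ∈ P, if E ∈ t then ζ (atomOf s t) else 0 := by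
    intro E hEs
    set Q : Finset (Finset (Set X)) := P.filter (E ∈ ·) with hQ
    have hdecomp : E = ⋃ t ∈ Q, atomOf s t := by
      apply Set.Subset.antisymm
      · intro x hx
        rw [Set.mem_iUnion₂]
        refine ⟨s.filter (x ∈ ·), ?_, ?_⟩
        · rw [hQ, Finset.mem_filter]
          exact ⟨Finset.mem_powerset.2 (Finset.filter_subset _ _),
            Finset.mem_filter.2 ⟨hEs, hx⟩⟩
        · rw [mem_atomOf]; intro E' hE'; simp [Finset.mem_filter, hE']
      · intro x hx
        rw [Set.mem_iUnion₂] at hx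
        obtain ⟨t, ht, hxt⟩ := hx
        rw [hQ, Finset.mem_filter] at ht
        exact (mem_atomOf.1 hxt E hEs).2 ht.2
    have := (charge_finset_union hG hζ Q (atomOf s)
      (fun t ht => hPmem t (Finset.mem_of_mem_filter t ht))
      (hPd.subset (by intro t ht; exact Finset.mem_of_mem_filter t ht))).2
    rw [← hdecomp] at this
    rw [this, hQ, Finset.sum_filter]
  have key : ∀ t ∈ P, (∑ E ∈ t, c E) * ζ (atomOf s t) ≤ M * ζ (atomOf s t) := by
    intro t ht
    have hζa : 0 ≤ ζ (atomOf s t) := hζ.nonneg _ (hPmem t ht)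
    rcases (atomOf s t).eq_empty_or_nonempty with h | ⟨x, hx⟩
    · rw [h, hζ.empty, mul_zero, mul_zero]
    · have hx' := mem_atomOf.1 hx
      have hfx2 : ∑ E ∈ t, c E = f x := by
        rw [hfx x]
        have h1 : ∀ E ∈ s, (if x ∈ E then c E else 0) = (if E ∈ t then c E else 0) :=
          fun E hEs => by rw [if_congr (hx' E hEs) rfl rfl]
        rw [Finset.sum_congr rfl h1, Finset.sum_ite_mem,
          Finset.inter_eq_right.2 (Finset.mem_powerset.1 ht)]
      exact mul_le_mul_of_nonneg_right (hfx2 ▸ hMx x) hζa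
  calc Finsupp.linearCombination ℝ ζ c = ∑ E ∈ s, c E * ζ E := by
        rw [Finsupp.linearCombination_apply, Finsupp.sum]; rfl
    _ = ∑ E ∈ s, ∑ t ∈ P, (if E ∈ t then c E * ζ (atomOf s t) else 0) := by
        refine Finset.sum_congr rfl fun E hEs => ?_
        rw [hE E hEs, Finset.mul_sum]
        exact Finset.sum_congr rfl fun t _ => by rw [mul_ite, mul_zero]
    _ = ∑ t ∈ P, (∑ E ∈ t, c E) * ζ (atomOf s t) := by
        rw [Finset.sum_comm]
        refine Finset.sum_congr rfl fun t ht => ?_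
        rw [Finset.sum_mul]
        have h1 : ∀ E ∈ s, (if E ∈ t then c E * ζ (atomOf s t) else 0)
            = (if E ∈ t then c E * ζ (atomOf s t) else 0) := fun _ _ => rfl
        rw [Finset.sum_ite_mem, Finset.inter_eq_right.2 (Finset.mem_powerset.1 ht)]
    _ ≤ ∑ t ∈ P, M * ζ (atomOf s t) := Finset.sum_le_sum key
    _ = M := by rw [← Finset.mul_sum, hsum1, mul_one]

end Core


lemma exists_linear_factor {R M N : Type*} [CommRing R] [AddCommGroup M] [AddCommGroup N]
    [Module R M] [Module R N] (f : M →ₗ[R] N) (g : M →ₗ[R] R)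
    (h : LinearMap.ker f ≤ LinearMap.ker g) :
    ∃ ℓ : LinearMap.range f →ₗ[R] R,
      ∀ x : M, ℓ ⟨f x, LinearMap.mem_range_self f x⟩ = g x := by
  refine ⟨((LinearMap.ker f).liftQ g h).comp
    (LinearMap.quotKerEquivRange f).symm.toLinearMap, fun x => ?_⟩
  simp only [LinearMap.comp_apply, LinearEquiv.coe_coe,
    LinearMap.quotKerEquivRange_symm_apply_image, Submodule.mkQ_apply,
    Submodule.liftQ_apply]

set_option maxHeartbeats 1000000 in
theorem charge_extension (X : Type) (F G : Set (Set X)) (hF : IsSetField F)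
    (hG : IsSetField G) (hGF : G ⊆ F) (ζ : Set X → ℝ) (hζ : IsChargeOn G ζ) :
    ∃ σ : Set X → ℝ, IsChargeOn F σ ∧ ∀ E ∈ G, σ E = ζ E := by
  classical
  rcases isEmpty_or_nonempty X with hX | hX
  · exfalso
    have h1 := hζ.total
    rw [Set.univ_eq_empty_iff.2 hX, hζ.empty] at h1
    exact zero_ne_one h1
  letI : TopologicalSpace X := ⊥
  haveI : DiscreteTopology X := ⟨rfl⟩
  set D : Submodule ℝ (Set X →₀ ℝ) := Finsupp.supported ℝ ℝ G with hD
  set π : (Set X →₀ ℝ) →ₗ[ℝ] (X →ᵇ ℝ) := Finsupp.linearCombination ℝ indBCF with hπ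
  set lam : (Set X →₀ ℝ) →ₗ[ℝ] ℝ := Finsupp.linearCombination ℝ ζ with hlam
  set πD : D →ₗ[ℝ] (X →ᵇ ℝ) := π.comp D.subtype with hπD
  set lamD : D →ₗ[ℝ] ℝ := lam.comp D.subtype with hlamD
  have core' : ∀ c : D, lamD c ≤ ⨆ x, (πD c) x := by
    intro c
    exact core_dominated hG hζ c.1 (Finsupp.mem_supported ℝ _ |>.1 c.2)
  have hker : LinearMap.ker πD ≤ LinearMap.ker lamD := by
    intro c hc
    rw [LinearMap.mem_ker] at hc ⊢
    have h1 := core' c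
    have h2 := core' (-c)
    have hn1 : πD (-c) = -(πD c) := map_neg πD c
    have hn2 : lamD (-c) = -(lamD c) := map_neg lamD c
    have h3 : πD (-c) = 0 := by rw [hn1, hc, neg_zero]
    rw [hc] at h1
    rw [h3] at h2
    rw [hn2] at h2
    have hz : (⨆ x : X, ((0 : X →ᵇ ℝ)) x) = 0 := by simp
    rw [hz] at h1
    rw [hz] at h2
    linarith
  obtain ⟨ℓ₀, hℓ₀v⟩ := exists_linear_factor (R := ℝ) (M := ↥D) (N := X →ᵇ ℝ) πD lamD hker
  have Nhom : ∀ r : ℝ, 0 < r → ∀ f : X →ᵇ ℝ, (⨆ x, (r • f) x) = r * ⨆ x, f x := by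
    intro r hr f
    have h1 : ∀ x, (r • f) x = r * f x := fun x => rfl
    simp_rw [h1]
    exact (Real.mul_iSup_of_nonneg hr.le _).symm
  have Nadd : ∀ f g : X →ᵇ ℝ, (⨆ x, (f + g) x) ≤ (⨆ x, f x) + ⨆ x, g x := by
    intro f g
    refine ciSup_le fun x => ?_
    have h1 : (f + g) x = f x + g x := rfl
    rw [h1]
    exact add_le_add (le_ciSup f.isBounded_range.bddAbove x)
      (le_ciSup g.isBounded_range.bddAbove x)
  set pm : (X →ᵇ ℝ) →ₗ.[ℝ] ℝ := ⟨LinearMap.range πD, ℓ₀⟩ with hpm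
  have hdom : ∀ w : pm.domain, pm w ≤ ⨆ x, (w : X →ᵇ ℝ) x := by
    rintro ⟨w, hw⟩
    obtain ⟨c, hc⟩ := hw
    have heq : (⟨w, ⟨c, hc⟩⟩ : LinearMap.range πD) = ⟨πD c, LinearMap.mem_range_self _ c⟩ :=
      Subtype.ext hc.symm
    show ℓ₀ ⟨w, ⟨c, hc⟩⟩ ≤ ⨆ x, w x
    rw [heq, hℓ₀v c]
    subst hc
    exact core' c
  obtain ⟨g, hg1, hg2⟩ := exists_extension_of_le_sublinear pm (fun f => ⨆ x, f x) Nhom Nadd hdom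
  have hagree : ∀ E ∈ G, g (indBCF E) = ζ E := by
    intro E hE
    have hmemD : Finsupp.single E (1:ℝ) ∈ D := by
      rw [hD, Finsupp.mem_supported]
      refine Set.Subset.trans (Finset.coe_subset.2 Finsupp.support_single_subset) ?_
      simp [hE]
    set c : D := ⟨Finsupp.single E 1, hmemD⟩ with hc
    have hπc : πD c = indBCF E := by
      show π (Finsupp.single E 1) = indBCF E
      rw [hπ, Finsupp.linearCombination_single, one_smul]
    have hmem : indBCF E ∈ pm.domain := ⟨c, hπc⟩
    have h1 := hg1 ⟨indBCF E, hmem⟩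
    have h2 : pm ⟨indBCF E, hmem⟩ = ζ E := by
      show ℓ₀ ⟨indBCF E, hmem⟩ = ζ E
      have heq : (⟨indBCF E, hmem⟩ : LinearMap.range πD)
          = ⟨πD c, LinearMap.mem_range_self _ c⟩ := Subtype.ext hπc.symm
      rw [heq, hℓ₀v c]
      show lam (Finsupp.single E 1) = ζ E
      rw [hlam, Finsupp.linearCombination_single, one_smul]
    rw [← h2]
    exact h1
  refine ⟨fun E => g (indBCF E), ⟨?_, ?_, ?_, ?_⟩, hagree⟩
  · intro E _
    have h := hg2 (-(indBCF E))
    rw [map_neg] at h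
    have h2 : (⨆ x, (-(indBCF E)) x) ≤ 0 := by
      refine ciSup_le fun x => ?_
      have h3 : (-(indBCF E)) x = -(E.indicator 1 x) := rfl
      rw [h3, neg_nonpos]
      by_cases hx : x ∈ E <;> simp [Set.indicator_apply, hx]
    linarith
  · have h0 : indBCF (∅ : Set X) = 0 := by
      ext x; simp
    show g (indBCF (∅ : Set X)) = 0
    rw [h0, map_zero]
  · show g (indBCF (Set.univ : Set X)) = 1
    rw [hagree Set.univ hG.univ_mem, hζ.total]
  · intro E hE G₀ hG₀ hd
    have hadd : indBCF (E ∪ G₀) = indBCF E + indBCF G₀ := by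
      ext x
      simp only [indBCF_apply, BoundedContinuousFunction.add_apply,
        Set.indicator_union_of_disjoint hd, Pi.add_apply]
    show g (indBCF (E ∪ G₀)) = g (indBCF E) + g (indBCF G₀)
    rw [hadd, map_add]

/-- Every charge on a subfield `G` of a field `F` extends to a charge on `F`
(Łoś–Marczewski / Horn–Tarski); consequently, for any surjective field-measurable map
`φ : A → B` the induced pushforward map on charges, `Φ(κ)(G₀) = κ(φ⁻¹(G₀))`, is
surjective. -/
theorem charge_extension_and_pushforward_surjective :
    (∀ (X : Type) (F G : Set (Set X)), IsSetField F → IsSetField G → G ⊆ F →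
      ∀ ζ : Set X → ℝ, IsChargeOn G ζ →
        ∃ σ : Set X → ℝ, IsChargeOn F σ ∧ ∀ E ∈ G, σ E = ζ E) ∧
    (∀ (A B : Type) (F : Set (Set A)) (G : Set (Set B)), IsSetField F → IsSetField G →
      ∀ φ : A → B, Function.Surjective φ → (∀ G₀ ∈ G, φ ⁻¹' G₀ ∈ F) →
        ∀ η : Set B → ℝ, IsChargeOn G η →
          ∃ κ : Set A → ℝ, IsChargeOn F κ ∧ ∀ G₀ ∈ G, κ (φ ⁻¹' G₀) = η G₀) := by
  refine ⟨charge_extension, ?_⟩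
  intro A B F G hF hG φ hφ hmeas η hη
  set G' : Set (Set A) := (Set.preimage φ) '' G with hG'def
  have hG' : IsSetField G' := by
    constructor
    · exact ⟨∅, hG.empty_mem, by simp⟩
    · rintro E ⟨G₀, hG₀, rfl⟩
      exact ⟨G₀ᶜ, hG.compl_mem _ hG₀, by simp [Set.preimage_compl]⟩
    · rintro E ⟨G₀, hG₀, rfl⟩ E' ⟨G₁, hG₁, rfl⟩
      exact ⟨G₀ ∪ G₁, hG.union_mem _ hG₀ _ hG₁, by simp [Set.preimage_union]⟩
  have hsub : G' ⊆ F := by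
    rintro E ⟨G₀, hG₀, rfl⟩
    exact hmeas G₀ hG₀
  set ζ' : Set A → ℝ := fun S => η (φ '' S) with hζ'def
  have him : ∀ S : Set B, φ '' (φ ⁻¹' S) = S := fun S => Set.image_preimage_eq S hφ
  have hζ' : IsChargeOn G' ζ' := by
    constructor
    · rintro E ⟨G₀, hG₀, rfl⟩
      rw [hζ'def]
      simp only []
      rw [him G₀]
      exact hη.nonneg _ hG₀
    · show η (φ '' ∅) = 0
      rw [Set.image_empty]
      exact hη.empty
    · show η (φ '' Set.univ) = 1
      rw [Set.image_univ, Set.range_eq_univ.2 hφ]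
      exact hη.total
    · rintro E ⟨G₀, hG₀, rfl⟩ E' ⟨G₁, hG₁, rfl⟩ hd
      have hdisj : Disjoint G₀ G₁ := by
        rw [Set.disjoint_iff_inter_eq_empty]
        apply hφ.preimage_injective
        rw [Set.preimage_inter, Set.preimage_empty]
        exact Set.disjoint_iff_inter_eq_empty.1 hd
      show η (φ '' (φ ⁻¹' G₀ ∪ φ ⁻¹' G₁)) = η (φ '' (φ ⁻¹' G₀)) + η (φ '' (φ ⁻¹' G₁))
      rw [Set.image_union, him G₀, him G₁]
      exact hη.additive _ hG₀ _ hG₁ hdisj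
  obtain ⟨κ, hκ, hagree⟩ := charge_extension A F G' hF hG' hsub ζ' hζ'
  refine ⟨κ, hκ, fun G₀ hG₀ => ?_⟩
  rw [hagree _ ⟨G₀, hG₀, rfl⟩]
  show η (φ '' (φ ⁻¹' G₀)) = η G₀
  rw [him G₀]
end Aux
end
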